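/- Let K be a field and let (E₁, σ₁), (E₂, σ₂) be symplectic vector spaces over K with dim E₁ = dim E₂. Then there exists a linear isomorphism φ : E₁ → E₂ such that σ₂(φ(x), φ(y)) = σ₁(x, y) for all x, y ∈ E₁ (a linear symplectomorphism). -/

import Mathlib

open Module Submodule LinearMap LinearMap.BilinForm

section Aux

variable {K : Type*} [Field K]

/-- Standard values of a symplectic form on a hyperbolic pair. -/
private def symplJ (i j : Fin 2) : K :=
  if i = 0 ∧ j = 1 then 1 else if i = 1 ∧ j = 0 then -1 else 0

private lemma sympl_exists_pair {E : Type*} [AddCommGroup E] [Module K E]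
    (σ : LinearMap.BilinForm K E) (hnd : σ.Nondegenerate) [Nontrivial E] :
    ∃ x y : E, σ x y = 1 := by
  obtain ⟨x, hx⟩ := exists_ne (0 : E)
  have h : ¬ ∀ y, σ x y = 0 := fun h => hx (hnd.1 x h)
  push_neg at h
  obtain ⟨y, hy⟩ := h
  exact ⟨x, (σ x y)⁻¹ • y, by rw [map_smul, smul_eq_mul, inv_mul_cancel₀ hy]⟩

/-- Existence of a 2-dimensional symplectic subspace with a standard basis. -/
private lemma sympl_struct {E : Type*} [AddCommGroup E] [Module K E] [FiniteDimensional K E]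
    (σ : LinearMap.BilinForm K E) (halt : σ.IsAlt) (hnd : σ.Nondegenerate) [Nontrivial E] :
    ∃ (W : Submodule K E) (b : Basis (Fin 2) K W),
      finrank K W = 2 ∧ (σ.restrict W).Nondegenerate ∧
      ∀ i j, σ (b i) (b j) = symplJ i j := by
  obtain ⟨x, y, hxy⟩ := sympl_exists_pair σ hnd
  have hyx : σ y x = -1 := by
    have h0 := halt (x + y)
    simp only [map_add, LinearMap.add_apply, halt x, halt y, hxy] at h0
    linear_combination h0
  have hli : LinearIndependent K ![x, y] := by
    rw [LinearIndependent.pair_iff]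
    intro s t hst
    have h1 : σ (s • x + t • y) y = s := by
      simp [map_add, map_smul, hxy, halt y]
    have h2 : σ (s • x + t • y) x = -t := by
      simp [map_add, map_smul, hyx, halt x]
    rw [hst] at h1 h2
    simp only [map_zero, LinearMap.zero_apply] at h1 h2
    exact ⟨h1.symm, neg_eq_zero.mp h2.symm⟩
  set W : Submodule K E := span K (Set.range ![x, y]) with hW
  have hfr : finrank K W = 2 := by
    rw [hW, finrank_span_eq_card hli]; simp
  have hxW : x ∈ W := subset_span ⟨0, rfl⟩
  have hyW : y ∈ W := subset_span ⟨1, rfl⟩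
  set v : Fin 2 → W := fun i => ⟨![x, y] i, subset_span ⟨i, rfl⟩⟩ with hv
  have hliv : LinearIndependent K v := by
    apply LinearIndependent.of_comp W.subtype
    convert hli
    funext i; rfl
  let b : Basis (Fin 2) K W := basisOfLinearIndependentOfCardEqFinrank hliv (by simp [hfr])
  have hb : ∀ i, (b i : E) = ![x, y] i := fun i => by
    rw [show b = basisOfLinearIndependentOfCardEqFinrank hliv (by simp [hfr]) from rfl,
      coe_basisOfLinearIndependentOfCardEqFinrank]
  have hnd' : (σ.restrict W).Nondegenerate := by
    refine (LinearMap.IsRefl.nondegenerate_iff_separatingLeft (B := σ.restrict W)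
      (fun u v h => halt.isRefl _ _ h)).mpr ?_
    rintro ⟨w, hw⟩ h
    have hwx : σ w x = 0 := h ⟨x, hxW⟩
    have hwy : σ w y = 0 := h ⟨y, hyW⟩
    have hrange : Set.range ![x, y] = {x, y} := by
      ext u
      simp only [Set.mem_range, Set.mem_insert_iff, Set.mem_singleton_iff]
      constructor
      · rintro ⟨i, rfl⟩; fin_cases i <;> simp
      · rintro (rfl | rfl); exacts [⟨0, rfl⟩, ⟨1, rfl⟩]
    rw [hW, hrange] at hw
    obtain ⟨a, c, rfl⟩ := mem_span_pair.mp hw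
    have ha : a = 0 := by
      have := hwy; simp [map_add, map_smul, hxy, halt y] at this; exact this
    have hc : c = 0 := by
      have := hwx; simp [map_add, map_smul, hyx, halt x] at this; exact this
    simp [ha, hc]
  refine ⟨W, b, hfr, hnd', fun i j => ?_⟩
  fin_cases i <;> fin_cases j <;>
    simp [hb, symplJ, hxy, hyx, halt x, halt y]

/-- Orthogonal decomposition of a bilinear form evaluation. -/
private lemma sympl_expand {E : Type*} [AddCommGroup E] [Module K E]
    (σ : LinearMap.BilinForm K E) (halt : σ.IsAlt) (W : Submodule K E)
    (a a' : W) (b b' : σ.orthogonal W) :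
    σ (↑a + ↑b) (↑a' + ↑b') = σ (a : E) (a' : E) + σ (b : E) (b' : E) := by
  have h1 : σ (a : E) (b' : E) = 0 := b'.2 a a.2
  have h2 : σ (b : E) (a' : E) = 0 := halt.isRefl _ _ (b.2 a' a'.2)
  simp only [map_add, LinearMap.add_apply, h1, h2]
  ring

private theorem sympl_main (n : ℕ)
    {E₁ : Type*} [AddCommGroup E₁] [Module K E₁] [FiniteDimensional K E₁]
    {E₂ : Type*} [AddCommGroup E₂] [Module K E₂] [FiniteDimensional K E₂]
    (σ₁ : LinearMap.BilinForm K E₁) (σ₂ : LinearMap.BilinForm K E₂)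
    (halt₁ : σ₁.IsAlt) (hnd₁ : σ₁.Nondegenerate)
    (halt₂ : σ₂.IsAlt) (hnd₂ : σ₂.Nondegenerate)
    (h₁ : finrank K E₁ = n) (h₂ : finrank K E₂ = n) :
    ∃ φ : E₁ ≃ₗ[K] E₂, ∀ x y : E₁, σ₂ (φ x) (φ y) = σ₁ x y := by
  rcases Nat.eq_zero_or_pos n with hn | hn
  · subst hn
    have hs₁ : Subsingleton E₁ := finrank_zero_iff.mp h₁
    have hs₂ : Subsingleton E₂ := finrank_zero_iff.mp h₂
    refine ⟨LinearEquiv.ofFinrankEq _ _ (h₁.trans h₂.symm), fun x y => ?_⟩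
    rw [Subsingleton.elim x 0, Subsingleton.elim y 0]
    simp
  · have ht₁ : Nontrivial E₁ := finrank_pos_iff.mp (h₁ ▸ hn)
    have ht₂ : Nontrivial E₂ := finrank_pos_iff.mp (h₂ ▸ hn)
    obtain ⟨W₁, b₁, hfr₁, hndW₁, hval₁⟩ := sympl_struct σ₁ halt₁ hnd₁
    obtain ⟨W₂, b₂, hfr₂, hndW₂, hval₂⟩ := sympl_struct σ₂ halt₂ hnd₂
    have hcompl₁ : IsCompl W₁ (σ₁.orthogonal W₁) :=
      isCompl_orthogonal_of_restrict_nondegenerate halt₁.isRefl hndW₁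
    have hcompl₂ : IsCompl W₂ (σ₂.orthogonal W₂) :=
      isCompl_orthogonal_of_restrict_nondegenerate halt₂.isRefl hndW₂
    have hndO₁ : (σ₁.restrict (σ₁.orthogonal W₁)).Nondegenerate := by
      rw [restrict_nondegenerate_iff_isCompl_orthogonal halt₁.isRefl,
        orthogonal_orthogonal hnd₁ halt₁.isRefl]
      exact hcompl₁.symm
    have hndO₂ : (σ₂.restrict (σ₂.orthogonal W₂)).Nondegenerate := by
      rw [restrict_nondegenerate_iff_isCompl_orthogonal halt₂.isRefl,
        orthogonal_orthogonal hnd₂ halt₂.isRefl]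
      exact hcompl₂.symm
    have hfo₁ : finrank K (σ₁.orthogonal W₁) = n - 2 := by
      rw [finrank_orthogonal hnd₁ W₁, hfr₁, h₁]
    have hfo₂ : finrank K (σ₂.orthogonal W₂) = n - 2 := by
      rw [finrank_orthogonal hnd₂ W₂, hfr₂, h₂]
    obtain ⟨ψ, hψ⟩ := sympl_main (n - 2)
      (σ₁.restrict (σ₁.orthogonal W₁)) (σ₂.restrict (σ₂.orthogonal W₂))
      (fun u => halt₁ u) hndO₁ (fun u => halt₂ u) hndO₂ hfo₁ hfo₂
    -- the equivalence between the 2-dimensional pieces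
    set η : W₁ ≃ₗ[K] W₂ := b₁.equiv b₂ (Equiv.refl _) with hη
    have hηval : ∀ u v : W₁, σ₂ (η u : E₂) (η v : E₂) = σ₁ (u : E₁) (v : E₁) := by
      have heq : (σ₂.restrict W₂).compl₁₂ (η : W₁ →ₗ[K] W₂) (η : W₁ →ₗ[K] W₂)
          = σ₁.restrict W₁ := by
        refine LinearMap.ext_basis b₁ b₁ fun i j => ?_
        simp only [compl₁₂_apply, LinearEquiv.coe_coe, hη, Basis.equiv_apply, Equiv.refl_apply,
          LinearMap.BilinForm.restrict_apply, domRestrict_apply]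
        rw [hval₁ i j, hval₂ i j]
      intro u v
      have := LinearMap.congr_fun₂ heq u v
      simpa using this
    set e₁ := prodEquivOfIsCompl W₁ (σ₁.orthogonal W₁) hcompl₁ with he₁
    set e₂ := prodEquivOfIsCompl W₂ (σ₂.orthogonal W₂) hcompl₂ with he₂
    refine ⟨e₁.symm.trans ((η.prodCongr ψ).trans e₂), fun u v => ?_⟩
    obtain ⟨p, rfl⟩ := e₁.surjective u
    obtain ⟨q, rfl⟩ := e₁.surjective v
    simp only [LinearEquiv.trans_apply, LinearEquiv.symm_apply_apply]
    rw [he₂, coe_prodEquivOfIsCompl', he₁, coe_prodEquivOfIsCompl',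
      coe_prodEquivOfIsCompl', coe_prodEquivOfIsCompl']
    simp only [LinearEquiv.prodCongr_apply]
    rw [sympl_expand σ₂ halt₂ W₂ (η p.1) (η q.1) (ψ p.2) (ψ q.2),
      sympl_expand σ₁ halt₁ W₁ p.1 q.1 p.2 q.2, hηval]
    have h5 := hψ p.2 q.2
    simp only [LinearMap.BilinForm.restrict_apply, domRestrict_apply] at h5
    rw [h5]
  termination_by n
  decreasing_by omega

end Aux

/-- Two symplectic vector spaces over the same field with the same (finite) dimension
are linearly symplectomorphic. -/
theorem exists_linear_symplectomorphism
    {K : Type*} [Field K]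
    {E₁ : Type*} [AddCommGroup E₁] [Module K E₁] [FiniteDimensional K E₁]
    {E₂ : Type*} [AddCommGroup E₂] [Module K E₂] [FiniteDimensional K E₂]
    (σ₁ : E₁ →ₗ[K] E₁ →ₗ[K] K) (σ₂ : E₂ →ₗ[K] E₂ →ₗ[K] K)
    (halt₁ : ∀ x : E₁, σ₁ x x = 0)
    (hnd₁ : ∀ x : E₁, (∀ y : E₁, σ₁ x y = 0) → x = 0)
    (halt₂ : ∀ x : E₂, σ₂ x x = 0)
    (hnd₂ : ∀ x : E₂, (∀ y : E₂, σ₂ x y = 0) → x = 0)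
    (hdim : Module.finrank K E₁ = Module.finrank K E₂) :
    ∃ φ : E₁ ≃ₗ[K] E₂, ∀ x y : E₁, σ₂ (φ x) (φ y) = σ₁ x y := by
  exact sympl_main (Module.finrank K E₂) σ₁ σ₂ halt₁
    ((LinearMap.IsRefl.nondegenerate_iff_separatingLeft (B := σ₁)
      (fun u v h => LinearMap.BilinForm.IsAlt.isRefl halt₁ u v h)).mpr hnd₁) halt₂
    ((LinearMap.IsRefl.nondegenerate_iff_separatingLeft (B := σ₂)
      (fun u v h => LinearMap.BilinForm.IsAlt.isRefl halt₂ u v h)).mpr hnd₂) hdim rfl
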